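/- Let s ∈ ℕ and let L : (ℂ²)^{⊗2s} →ₗ[ℂ] ℂ be a linear functional. Define E : ℝ → ℂ by E(θ) = L(u_1(θ) ⊗ ⋯ ⊗ u_{2s}(θ)), where u_j(θ) = e₀ + exp(iθ)·e₁ for 1 ≤ j ≤ s and u_j(θ) = e₀ + exp(−iθ)·e₁ for s+1 ≤ j ≤ 2s. Then E is differentiable and E'(θ) = i · [ Σ_{j=1}^{s} exp(iθ) · L(…⊗ e₁ ⊗…) − Σ_{j=s+1}^{2s} exp(−iθ) · L(…⊗ e₁ ⊗…) ], where in the j-th summand the j-th tensor factor is e₁ and every other factor l is u_l(θ). (This gives the derivative of a parameterised quantum circuit expectation ⟨0|U†(θ)HU(θ)|0⟩, which has an equal number of occurrences of θ and −θ, as a single ZX diagram.) -/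

import Mathlib

open scoped TensorProduct

noncomputable section

/-- `ℂ²` with standard basis vectors. -/
abbrev C2 : Type := ℂ × ℂ

def e0 : C2 := (1, 0)
def e1 : C2 := (0, 1)

/-- Any multilinear map on finitely many copies of `C2` is bounded. -/
lemma multilinear_bound {n : ℕ} (M : MultilinearMap ℂ (fun _ : Fin n => C2) ℂ) (m : Fin n → C2) :
    ‖M m‖ ≤ (∑ r : Fin n → Bool, ‖M (fun j => if r j then e1 else e0)‖) * ∏ j, ‖m j‖ := by
  classical
  have hm : ∀ j, m j = ∑ i : Bool, (if i then (m j).2 else (m j).1) • (if i then e1 else e0) := by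
    intro j
    simp [e0, e1, Prod.ext_iff, Fintype.sum_bool]
  calc ‖M m‖ = ‖∑ r : Fin n → Bool, (∏ j, (if r j then (m j).2 else (m j).1)) •
        M (fun j => if r j then e1 else e0)‖ := by
        congr 1
        conv_lhs => rw [show m = fun j => ∑ i : Bool,
          (if i then (m j).2 else (m j).1) • (if i then e1 else e0) from funext hm]
        rw [MultilinearMap.map_sum]
        refine Finset.sum_congr rfl fun r _ => ?_
        rw [MultilinearMap.map_smul_univ]
    _ ≤ ∑ r : Fin n → Bool, ‖(∏ j, (if r j then (m j).2 else (m j).1)) •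
        M (fun j => if r j then e1 else e0)‖ := norm_sum_le _ _
    _ ≤ ∑ r : Fin n → Bool, ‖M (fun j => if r j then e1 else e0)‖ * ∏ j, ‖m j‖ := by
        refine Finset.sum_le_sum fun r _ => ?_
        rw [norm_smul, mul_comm]
        refine mul_le_mul_of_nonneg_left ?_ (norm_nonneg _)
        rw [norm_prod]
        refine Finset.prod_le_prod (fun j _ => norm_nonneg _) fun j _ => ?_
        by_cases h : r j <;> simp only [h, if_true, if_false]
        · exact norm_snd_le _
        · exact norm_fst_le _
    _ = (∑ r : Fin n → Bool, ‖M (fun j => if r j then e1 else e0)‖) * ∏ j, ‖m j‖ := by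
        rw [Finset.sum_mul]

/-- The `j`-th tensor factor of a circuit expectation diagram:
`u_j(θ) = e₀ + exp(iθ)·e₁` for `j < s` and `u_j(θ) = e₀ + exp(−iθ)·e₁` otherwise. -/
def u (s : ℕ) (θ : ℝ) (j : Fin (2 * s)) : C2 :=
  if (j : ℕ) < s then e0 + Complex.exp (Complex.I * (θ : ℂ)) • e1
  else e0 + Complex.exp (-(Complex.I * (θ : ℂ))) • e1

/-- the derivative of a parameterised quantum circuit expectation,
with equal numbers of occurrences of `θ` and `−θ`, as a single ZX diagram. -/
theorem deriv_circuit_expectation (s : ℕ)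
    (L : (⨂[ℂ] _ : Fin (2 * s), C2) →ₗ[ℂ] ℂ)
    (E : ℝ → ℂ) (hE : ∀ θ, E θ = L (⨂ₜ[ℂ] j, u s θ j)) (θ : ℝ) :
    HasDerivAt E
      (Complex.I *
        ((∑ j ∈ Finset.univ.filter (fun j : Fin (2 * s) => (j : ℕ) < s),
            Complex.exp (Complex.I * (θ : ℂ)) *
              L (⨂ₜ[ℂ] l, (if l = j then e1 else u s θ l))) -
         (∑ j ∈ Finset.univ.filter (fun j : Fin (2 * s) => ¬ (j : ℕ) < s),
            Complex.exp (-(Complex.I * (θ : ℂ))) *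
              L (⨂ₜ[ℂ] l, (if l = j then e1 else u s θ l)))))
      θ := by
  classical
  set M : MultilinearMap ℂ (fun _ : Fin (2 * s) => C2) ℂ :=
    L.compMultilinearMap (PiTensorProduct.tprod ℂ) with hM
  set Mc : ContinuousMultilinearMap ℂ (fun _ : Fin (2 * s) => C2) ℂ :=
    M.mkContinuous _ (multilinear_bound M) with hMc
  set p : Fin (2 * s) → C2 := fun j => u s θ j with hp
  set c' : Fin (2 * s) → ℂ := fun j =>
    if (j : ℕ) < s then Complex.exp (Complex.I * (θ : ℂ)) * Complex.I
    else Complex.exp (-(Complex.I * (θ : ℂ))) * (-Complex.I) with hc'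
  set v : Fin (2 * s) → C2 := fun j => c' j • e1 with hv
  have hg : HasDerivAt (fun t : ℝ => fun j => u s t j) v θ := by
    rw [hasDerivAt_pi]
    intro j
    by_cases h : (j : ℕ) < s
    · have h1 : HasDerivAt (fun t : ℝ => Complex.exp (Complex.I * (t : ℂ)))
          (Complex.exp (Complex.I * (θ : ℂ)) * Complex.I) θ := by
        have h2 : HasDerivAt (fun z : ℂ => Complex.exp (Complex.I * z))
            (Complex.exp (Complex.I * (θ : ℂ)) * Complex.I) (θ : ℂ) := by
          simpa using ((hasDerivAt_id ((θ : ℝ) : ℂ)).const_mul Complex.I).cexp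
        exact h2.comp_ofReal
      have := (h1.smul_const e1).const_add e0
      simp only [u, h, if_true, hv, hc']
      exact this
    · have h1 : HasDerivAt (fun t : ℝ => Complex.exp (-(Complex.I * (t : ℂ))))
          (Complex.exp (-(Complex.I * (θ : ℂ))) * (-Complex.I)) θ := by
        have h2 : HasDerivAt (fun z : ℂ => Complex.exp (-(Complex.I * z)))
            (Complex.exp (-(Complex.I * (θ : ℂ))) * (-Complex.I)) (θ : ℂ) := by
          simpa using (((hasDerivAt_id ((θ : ℝ) : ℂ)).const_mul Complex.I).neg).cexp
        exact h2.comp_ofReal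
      have := (h1.smul_const e1).const_add e0
      simp only [u, h, if_false, hv, hc']
      exact this
  have hMd : HasFDerivAt (fun m => Mc m) ((Mc.linearDeriv p).restrictScalars ℝ) p :=
    (Mc.hasFDerivAt p).restrictScalars ℝ
  have hcomp : HasDerivAt (fun t : ℝ => Mc (fun j => u s t j))
      (Mc.linearDeriv p v) θ := by
    have := hMd.comp_hasDerivAt θ hg
    exact this
  have hEeq : E = fun t : ℝ => Mc (fun j => u s t j) := by
    funext t
    rw [hE]
    simp [hMc, hM]
  rw [hEeq]
  convert hcomp using 1
  rw [ContinuousMultilinearMap.linearDeriv_apply]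
  have hterm : ∀ i : Fin (2 * s),
      Mc (Function.update p i (v i)) =
        c' i * L (⨂ₜ[ℂ] l, (if l = i then e1 else u s θ l)) := by
    intro i
    have : Function.update p i e1 = fun l => if l = i then e1 else u s θ l := by
      funext l
      simp [Function.update_apply, hp]
    rw [hv]
    show Mc (Function.update p i (c' i • e1)) = _
    rw [Mc.map_update_smul, this]
    simp [hMc, hM, smul_eq_mul]
  rw [← Finset.sum_filter_add_sum_filter_not Finset.univ (fun j : Fin (2 * s) => (j : ℕ) < s)
    (fun i => Mc (Function.update p i (v i)))]
  rw [mul_sub, Finset.mul_sum, Finset.mul_sum, sub_eq_add_neg, ← Finset.sum_neg_distrib]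
  congr 1
  · refine Finset.sum_congr rfl fun i hi => ?_
    rw [hterm i, hc']
    simp only [(Finset.mem_filter.mp hi).2, if_true]
    ring
  · refine Finset.sum_congr rfl fun i hi => ?_
    rw [hterm i, hc']
    simp only [(Finset.mem_filter.mp hi).2, if_false]
    ring
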